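/- Let n ≥ 1 and let G be a graph on vertex set {1,…,n+1} (a loopless directed finite multigraph with all edges directed from smaller to larger vertices). Then the restricted Kostant partition function of G is discretely log-concave along type A root directions: for every v ∈ ℤ^{n+1} and all i, j ∈ {1,…,n+1}, K_G(v)² ≥ K_G(v + ε_i − ε_j) · K_G(v + ε_j − ε_i). -/

import Mathlib

open Finset

/-- The `i`-th standard basis vector of `ℤ^{n+1}`. -/
def eps (n : ℕ) (i : Fin (n + 1)) : Fin (n + 1) → ℤ := Pi.single i 1

/-- The restricted Kostant partition function of a graph on `{1,…,n+1}` with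
edge set `E`, source map `s` and target map `t`:  the number of functions
`f : E → ℕ` with `∑_e f(e)(ε_{s(e)} - ε_{t(e)}) = v`. -/
noncomputable def kpfG (n : ℕ) (E : Type) [Fintype E] (s t : E → Fin (n + 1))
    (v : Fin (n + 1) → ℤ) : ℕ :=
  Set.ncard {f : E → ℕ | ∑ e, (f e : ℤ) • (eps n (s e) - eps n (t e)) = v}

namespace KPFAux

variable {n : ℕ} {E : Type} [Fintype E]

/-- divergence of an integer vector on edges -/
def dvz (s t : E → Fin (n + 1)) (d : E → ℤ) : Fin (n + 1) → ℤ :=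
  ∑ e, d e • (eps n (s e) - eps n (t e))

/-- divergence of a natural vector on edges -/
def dv (s t : E → Fin (n + 1)) (f : E → ℕ) : Fin (n + 1) → ℤ :=
  dvz s t (fun e => (f e : ℤ))

lemma eps_apply (a b : Fin (n + 1)) : eps n a b = if b = a then 1 else 0 := by
  simp [eps, Pi.single_apply]

lemma dvz_add (s t : E → Fin (n + 1)) (d₁ d₂ : E → ℤ) :
    dvz s t (d₁ + d₂) = dvz s t d₁ + dvz s t d₂ := by
  simp [dvz, add_smul, Finset.sum_add_distrib]

lemma dvz_sub (s t : E → Fin (n + 1)) (d₁ d₂ : E → ℤ) :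
    dvz s t (d₁ - d₂) = dvz s t d₁ - dvz s t d₂ := by
  simp [dvz, sub_smul, Finset.sum_sub_distrib]

lemma dvz_apply (s t : E → Fin (n + 1)) (d : E → ℤ) (k : Fin (n + 1)) :
    dvz s t d k = ∑ e, d e * ((if k = s e then 1 else 0) - (if k = t e then 1 else 0)) := by
  simp [dvz, Finset.sum_apply, eps_apply, mul_sub]

lemma dvz_single [DecidableEq E] (s t : E → Fin (n + 1)) (e₀ : E) (c : ℤ) :
    dvz s t (Pi.single e₀ c) = c • (eps n (s e₀) - eps n (t e₀)) := by
  simp [dvz, Pi.single_apply, ite_smul, Finset.sum_ite_eq']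

lemma dv_add (s t : E → Fin (n + 1)) (f g : E → ℕ) :
    dv s t (f + g) = dv s t f + dv s t g := by
  have : (fun e => (((f + g) e : ℕ) : ℤ)) = (fun e => (f e : ℤ)) + fun e => (g e : ℤ) := by
    funext e
    simp
  rw [dv, this, dvz_add]
  rfl

lemma dv_sub (s t : E → Fin (n + 1)) {f g : E → ℕ} (hgf : g ≤ f) :
    dv s t (f - g) = dv s t f - dv s t g := by
  have : (fun e => (((f - g) e : ℕ) : ℤ)) = (fun e => (f e : ℤ)) - fun e => (g e : ℤ) := by
    funext e
    simp only [Pi.sub_apply]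
    rw [Nat.cast_sub (hgf e)]
  rw [dv, this, dvz_sub]
  rfl

lemma dv_zero (s t : E → Fin (n + 1)) : dv s t 0 = 0 := by
  simp [dv, dvz]



lemma eps_self (a : Fin (n + 1)) : eps n a a = 1 := by
  simp [eps_apply]

lemma eps_ne {a b : Fin (n + 1)} (h : b ≠ a) : eps n a b = 0 := by
  simp [eps_apply, h]

lemma exists_conformal [DecidableEq E] (s t : E → Fin (n + 1)) (hst : ∀ e, s e ≠ t e) :
    ∀ N : ℕ, ∀ d : E → ℤ, (∑ e, (d e).natAbs) ≤ N →
    ∀ j : Fin (n + 1), dvz s t d j < 0 → (∀ k, k ≠ j → 0 ≤ dvz s t d k) →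
    ∀ i : Fin (n + 1), 0 < dvz s t d i →
    ∃ p : E → ℤ, dvz s t p = eps n i - eps n j ∧
      ∀ e, (0 ≤ p e ∧ p e ≤ d e) ∨ (d e ≤ p e ∧ p e ≤ 0) := by
  intro N
  induction N with
  | zero =>
    intro d hd j hj _ i _
    exfalso
    have hd0 : ∀ e, d e = 0 := by
      intro e
      have h1 : ∑ e, (d e).natAbs = 0 := Nat.le_zero.mp hd
      have h2 := (Finset.sum_eq_zero_iff.mp h1) e (Finset.mem_univ e)
      omega
    have : dvz s t d j = 0 := by
      rw [dvz_apply]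
      apply Finset.sum_eq_zero
      intro e _
      rw [hd0]
      ring
    omega
  | succ N ih =>
    intro d hd j hj hpos i hi
    have hij : i ≠ j := by
      intro h
      rw [h] at hi
      omega
    have key : ∃ e, (0 < d e ∧ s e = i) ∨ (d e < 0 ∧ t e = i) := by
      by_contra hcon
      push_neg at hcon
      have hle : dvz s t d i ≤ 0 := by
        rw [dvz_apply]
        apply Finset.sum_nonpos
        intro e _
        obtain ⟨hA, hB⟩ := hcon e
        by_cases e1 : i = s e <;> by_cases e2 : i = t e
        · rw [if_pos e1, if_pos e2]
          simp
        · rw [if_pos e1, if_neg e2, sub_zero, mul_one]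
          have h3 : ¬ 0 < d e := fun h => hA h e1.symm
          omega
        · rw [if_neg e1, if_pos e2, zero_sub, mul_neg_one]
          have h3 : ¬ d e < 0 := fun h => hB h e2.symm
          omega
        · rw [if_neg e1, if_neg e2]
          simp
      omega
    obtain ⟨e₀, he₀⟩ := key
    have hne : s e₀ ≠ t e₀ := hst e₀
    rcases he₀ with ⟨hde, hse⟩ | ⟨hde, hte⟩
    · -- residual arc leaves i along e₀ (forward: s e₀ = i)
      by_cases hij' : t e₀ = j
      · refine ⟨Pi.single e₀ 1, by rw [dvz_single, one_smul, hse, hij'], ?_⟩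
        intro e
        by_cases he : e = e₀
        · subst he
          left
          simp [Pi.single_apply]
          omega
        · rcases le_total (d e) 0 with h | h
          · right; simp [Pi.single_apply, he, h]
          · left; simp [Pi.single_apply, he, h]
      · set d' := d - Pi.single e₀ 1 with hd'
        have hd'e₀ : d' e₀ = d e₀ - 1 := by simp [hd']
        have hd'e : ∀ e, e ≠ e₀ → d' e = d e := by
          intro e he
          simp [hd', Pi.single_apply, he]
        have hdvz' : dvz s t d' = dvz s t d - (eps n i - eps n (t e₀)) := by
          rw [hd', dvz_sub, dvz_single, one_smul, hse]
        have hti : t e₀ ≠ i := fun h => hne (hse.trans h.symm)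
        have hj' : dvz s t d' j < 0 := by
          rw [hdvz']
          simp only [Pi.sub_apply]
          rw [eps_ne (Ne.symm hij), eps_ne (Ne.symm hij')]
          omega
        have hpos' : ∀ k, k ≠ j → 0 ≤ dvz s t d' k := by
          intro k hk
          have h0 := hpos k hk
          rw [hdvz']
          simp only [Pi.sub_apply]
          by_cases hki : k = i
          · subst hki
            rw [eps_self, eps_ne (fun h : k = t e₀ => hti h.symm)]
            have h1 : 0 < dvz s t d k := hi
            omega
          · by_cases hkt : k = t e₀
            · subst hkt
              rw [eps_ne hki, eps_self]
              omega
            · rw [eps_ne hki, eps_ne hkt]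
              omega
        have hi' : 0 < dvz s t d' (t e₀) := by
          have h0 := hpos (t e₀) hij'
          rw [hdvz']
          simp only [Pi.sub_apply]
          rw [eps_ne hti, eps_self]
          omega
        have hsum' : ∑ e, (d' e).natAbs ≤ N := by
          rw [← Finset.sum_erase_add _ _ (Finset.mem_univ e₀)] at hd ⊢
          have h1 : ∑ e ∈ Finset.univ.erase e₀, (d' e).natAbs
              = ∑ e ∈ Finset.univ.erase e₀, (d e).natAbs :=
            Finset.sum_congr rfl fun e he => by rw [hd'e e (Finset.ne_of_mem_erase he)]
          rw [h1, hd'e₀]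
          omega
        obtain ⟨p', hp'1, hp'2⟩ := ih d' hsum' j hj' hpos' (t e₀) hi'
        refine ⟨p' + Pi.single e₀ 1, ?_, ?_⟩
        · rw [dvz_add, hp'1, dvz_single, one_smul, hse]
          abel
        · intro e
          by_cases he : e = e₀
          · subst he
            have h2 := hp'2 e
            rw [hd'e₀] at h2
            simp only [Pi.add_apply, Pi.single_eq_same]
            omega
          · have h2 := hp'2 e
            rw [hd'e e he] at h2
            simp only [Pi.add_apply, Pi.single_eq_of_ne he, add_zero]
            omega
    · -- residual arc leaves i along e₀ (backward: t e₀ = i)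
      by_cases hij' : s e₀ = j
      · refine ⟨Pi.single e₀ (-1), ?_, ?_⟩
        · rw [dvz_single, hte, hij', neg_smul, one_smul, neg_sub]
        · intro e
          by_cases he : e = e₀
          · subst he
            right
            simp [Pi.single_apply]
            omega
          · rcases le_total (d e) 0 with h | h
            · right; simp [Pi.single_apply, he, h]
            · left; simp [Pi.single_apply, he, h]
      · set d' := d + Pi.single e₀ 1 with hd'
        have hd'e₀ : d' e₀ = d e₀ + 1 := by simp [hd']
        have hd'e : ∀ e, e ≠ e₀ → d' e = d e := by
          intro e he
          simp [hd', Pi.single_apply, he]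
        have hdvz' : dvz s t d' = dvz s t d + (eps n (s e₀) - eps n i) := by
          rw [hd', dvz_add, dvz_single, one_smul, hte]
        have hsi : s e₀ ≠ i := fun h => hne (h.trans hte.symm)
        have hj' : dvz s t d' j < 0 := by
          rw [hdvz']
          simp only [Pi.add_apply, Pi.sub_apply]
          rw [eps_ne (Ne.symm hij), eps_ne (Ne.symm hij')]
          omega
        have hpos' : ∀ k, k ≠ j → 0 ≤ dvz s t d' k := by
          intro k hk
          have h0 := hpos k hk
          rw [hdvz']
          simp only [Pi.add_apply, Pi.sub_apply]
          by_cases hki : k = i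
          · subst hki
            rw [eps_self, eps_ne (fun h : k = s e₀ => hsi h.symm)]
            have h1 : 0 < dvz s t d k := hi
            omega
          · by_cases hks : k = s e₀
            · subst hks
              rw [eps_ne hki, eps_self]
              omega
            · rw [eps_ne hki, eps_ne hks]
              omega
        have hi' : 0 < dvz s t d' (s e₀) := by
          have h0 := hpos (s e₀) hij'
          rw [hdvz']
          simp only [Pi.add_apply, Pi.sub_apply]
          rw [eps_self, eps_ne hsi]
          omega
        have hsum' : ∑ e, (d' e).natAbs ≤ N := by
          rw [← Finset.sum_erase_add _ _ (Finset.mem_univ e₀)] at hd ⊢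
          have h1 : ∑ e ∈ Finset.univ.erase e₀, (d' e).natAbs
              = ∑ e ∈ Finset.univ.erase e₀, (d e).natAbs :=
            Finset.sum_congr rfl fun e he => by rw [hd'e e (Finset.ne_of_mem_erase he)]
          rw [h1, hd'e₀]
          omega
        obtain ⟨p', hp'1, hp'2⟩ := ih d' hsum' j hj' hpos' (s e₀) hi'
        refine ⟨p' - Pi.single e₀ 1, ?_, ?_⟩
        · rw [dvz_sub, hp'1, dvz_single, one_smul, hte]
          abel
        · intro e
          by_cases he : e = e₀
          · subst he
            have h2 := hp'2 e
            rw [hd'e₀] at h2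
            simp only [Pi.sub_apply, Pi.single_eq_same]
            omega
          · have h2 := hp'2 e
            rw [hd'e e he] at h2
            simp only [Pi.sub_apply, Pi.single_eq_of_ne he, sub_zero]
            omega


/-- number of integer flows in the box `[0,h]` with divergence `w` -/
noncomputable def Dbox [DecidableEq E] (s t : E → Fin (n + 1)) (h : E → ℕ)
    (w : Fin (n + 1) → ℤ) : ℕ :=
  ((Finset.Iic h).filter (fun f => dv s t f = w)).card

lemma Dbox_symm [DecidableEq E] (s t : E → Fin (n + 1)) (h : E → ℕ)
    (v a : Fin (n + 1) → ℤ) (hh : dv s t h = v + v) :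
    Dbox s t h (v + a) = Dbox s t h (v - a) := by
  classical
  unfold Dbox
  apply Finset.card_bij' (fun f _ => h - f) (fun g _ => h - g)
  · intro f hf
    simp only [Finset.mem_filter, Finset.mem_Iic] at hf ⊢
    obtain ⟨hf1, hf2⟩ := hf
    constructor
    · intro e
      exact Nat.sub_le _ _
    · rw [dv_sub s t hf1, hh, hf2]
      abel
  · intro g hg
    simp only [Finset.mem_filter, Finset.mem_Iic] at hg ⊢
    obtain ⟨hg1, hg2⟩ := hg
    constructor
    · intro e
      exact Nat.sub_le _ _
    · rw [dv_sub s t hg1, hh, hg2]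
      abel
  · intro f hf
    simp only [Finset.mem_filter, Finset.mem_Iic] at hf
    funext e
    exact Nat.sub_sub_self (hf.1 e)
  · intro g hg
    simp only [Finset.mem_filter, Finset.mem_Iic] at hg
    funext e
    exact Nat.sub_sub_self (hg.1 e)

/-- If the fibre over `v+α` and the fibre over `v-α` in a box are both nonempty,
then so is the fibre over `v`. -/
lemma mid_nonempty [DecidableEq E] (s t : E → Fin (n + 1)) (hst : ∀ e, s e ≠ t e)
    {i j : Fin (n + 1)} (hij : i ≠ j) (h f g : E → ℕ) (hf : f ≤ h) (hg : g ≤ h)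
    {v : Fin (n + 1) → ℤ}
    (df : dv s t f = v + (eps n i - eps n j)) (dg : dv s t g = v - (eps n i - eps n j)) :
    ∃ F : E → ℕ, F ≤ h ∧ dv s t F = v := by
  set d : E → ℤ := (fun e => (f e : ℤ)) - (fun e => (g e : ℤ)) with hd
  have hde : ∀ e, d e = (f e : ℤ) - (g e : ℤ) := fun e => rfl
  have hdvz : dvz s t d = (eps n i - eps n j) + (eps n i - eps n j) := by
    rw [hd, dvz_sub]
    show dv s t f - dv s t g = _
    rw [df, dg]
    abel
  have hjneg : dvz s t d j < 0 := by
    rw [hdvz]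
    simp only [Pi.add_apply, Pi.sub_apply]
    rw [eps_ne (Ne.symm hij), eps_self]
    omega
  have hpos : ∀ k, k ≠ j → 0 ≤ dvz s t d k := by
    intro k hk
    rw [hdvz]
    simp only [Pi.add_apply, Pi.sub_apply]
    by_cases hki : k = i
    · subst hki
      rw [eps_self, eps_ne hk]
      omega
    · rw [eps_ne hki, eps_ne hk]
      omega
  have hipos : 0 < dvz s t d i := by
    rw [hdvz]
    simp only [Pi.add_apply, Pi.sub_apply]
    rw [eps_self, eps_ne hij]
    omega
  obtain ⟨p, hp1, hp2⟩ :=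
    exists_conformal s t hst (∑ e, (d e).natAbs) d le_rfl j hjneg hpos i hipos
  refine ⟨fun e => ((f e : ℤ) - p e).toNat, ?_, ?_⟩
  · intro e
    have hb := hp2 e
    rw [hde e] at hb
    have h2 : f e ≤ h e := hf e
    have h3 : g e ≤ h e := hg e
    simp only []
    omega
  · have hcoe : (fun e => ((((f e : ℤ) - p e).toNat : ℕ) : ℤ)) = (fun e => (f e : ℤ)) - p := by
      funext e
      have hb := hp2 e
      rw [hde e] at hb
      have h3 : g e ≤ h e := hg e
      simp only [Pi.sub_apply]
      omega
    show dvz s t (fun e => ((((f e : ℤ) - p e).toNat : ℕ) : ℤ)) = v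
    have hdf : dvz s t (fun e => (f e : ℤ)) = v + (eps n i - eps n j) := df
    rw [hcoe, dvz_sub, hdf, hp1]
    abel


/-- The fibre of the sum map over `m`, on pairs of box flows with divergences
`w₁` and `w₂`, is counted by a smaller box. -/
lemma fiber_card [DecidableEq E] (s t : E → Fin (n + 1)) (h m u l : E → ℕ)
    (v w₁ w₂ : Fin (n + 1) → ℤ) (hw : w₁ + w₂ = v + v) (hm : dv s t m = v + v)
    (hmh : ∀ e, m e ≤ h e + h e) (hu : ∀ e, u e = min (m e) (h e))
    (hl : ∀ e, l e = m e - u e) :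
    ((((Finset.Iic h).filter (fun f => dv s t f = w₁)) ×ˢ
      ((Finset.Iic h).filter (fun g => dv s t g = w₂))).filter
        (fun p => p.1 + p.2 = m)).card
      = Dbox s t (u - l) (w₁ - dv s t l) := by
  classical
  have hw₂ : w₂ = v + v - w₁ := by rw [← hw]; abel
  have hlu : ∀ e, l e ≤ u e := by
    intro e
    have h1 := hmh e; have h2 := hu e; have h3 := hl e
    omega
  have hul : ∀ e, u e ≤ h e := fun e => by have := hu e; omega
  have hum : ∀ e, u e ≤ m e := fun e => by have := hu e; omega
  have hulm : ∀ e, u e = m e - l e := fun e => by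
    have h2 := hu e; have h3 := hl e; omega
  unfold Dbox
  apply Finset.card_nbij' (fun p => p.1 - l) (fun f' => (f' + l, m - (f' + l)))
  · rintro ⟨f, g⟩ hp
    simp only [Finset.mem_coe, Finset.mem_filter, Finset.mem_product, Finset.mem_Iic] at hp ⊢
    obtain ⟨⟨⟨hf1, hf2⟩, hg1, hg2⟩, hfg⟩ := hp
    have hsum : ∀ e, f e + g e = m e := fun e => congrFun hfg e
    have hlf : l ≤ f := by
      intro e
      show l e ≤ f e
      have h1 := hsum e; have h2 := hl e; have h3 := hu e
      have h4 : g e ≤ h e := hg1 e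
      omega
    constructor
    · intro e
      have h1 : f e ≤ h e := hf1 e
      have h2 := hsum e; have h3 := hl e; have h4 := hu e
      show f e - l e ≤ u e - l e
      omega
    · rw [dv_sub s t hlf, hf2]
  · intro f' hf'
    simp only [Finset.mem_coe, Finset.mem_filter, Finset.mem_product, Finset.mem_Iic] at hf' ⊢
    obtain ⟨hf'1, hf'2⟩ := hf'
    have hb : ∀ e, f' e ≤ u e - l e := fun e => hf'1 e
    have hfm : ∀ e, f' e + l e ≤ m e := by
      intro e
      have h1 := hb e; have h2 := hulm e; have h4 := hlu e
      omega
    refine ⟨⟨⟨?_, ?_⟩, ?_, ?_⟩, ?_⟩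
    · intro e
      show f' e + l e ≤ h e
      have h1 := hb e; have h2 := hlu e; have h3 := hul e
      omega
    · rw [dv_add, hf'2]
      abel
    · intro e
      show m e - (f' e + l e) ≤ h e
      have h1 := hb e; have h2 := hulm e; have h3 := hul e; have h4 := hlu e
      omega
    · have hle : (f' + l) ≤ m := fun e => hfm e
      rw [dv_sub s t hle, hm, dv_add, hf'2, hw₂]
      abel
    · funext e
      show (f' e + l e) + (m e - (f' e + l e)) = m e
      have := hfm e
      omega
  · rintro ⟨f, g⟩ hp
    simp only [Finset.mem_coe, Finset.mem_filter, Finset.mem_product, Finset.mem_Iic] at hp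
    obtain ⟨⟨⟨hf1, hf2⟩, hg1, hg2⟩, hfg⟩ := hp
    have hsum : ∀ e, f e + g e = m e := fun e => congrFun hfg e
    have hlf : ∀ e, l e ≤ f e := by
      intro e
      have h1 := hsum e; have h2 := hl e; have h3 := hu e
      have h4 : g e ≤ h e := hg1 e
      omega
    have h1 : (f - l) + l = f := by
      funext e
      show f e - l e + l e = f e
      have := hlf e
      omega
    have h2 : m - f = g := by
      funext e
      show m e - f e = g e
      have := hsum e
      omega
    show ((f - l) + l, m - ((f - l) + l)) = (f, g)
    rw [h1, h2]
  · intro f' hf'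
    show (f' + l) - l = f'
    funext e
    show f' e + l e - l e = f' e
    omega


lemma fiber_empty [DecidableEq E] (s t : E → Fin (n + 1)) (T₁ T₂ : Finset (E → ℕ))
    (v w₁ w₂ : Fin (n + 1) → ℤ) (m : E → ℕ)
    (hT₁ : ∀ f ∈ T₁, dv s t f = w₁) (hT₂ : ∀ g ∈ T₂, dv s t g = w₂)
    (hw : w₁ + w₂ = v + v) (hm : dv s t m ≠ v + v) :
    ((T₁ ×ˢ T₂).filter (fun p => p.1 + p.2 = m)) = ∅ := by
  rw [Finset.filter_eq_empty_iff]
  rintro ⟨f, g⟩ hp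
  rw [Finset.mem_product] at hp
  intro hfg
  apply hm
  rw [← hfg, dv_add, hT₁ f hp.1, hT₂ g hp.2, hw]

/-- Key lemma: in a box `[0,h]` with `div h = 2v`, the fibre over `v + α`
is no larger than the central fibre over `v`, for a root `α = εᵢ - εⱼ`. -/
lemma thmA [DecidableEq E] (s t : E → Fin (n + 1)) (hst : ∀ e, s e ≠ t e)
    {i j : Fin (n + 1)} (hij : i ≠ j) :
    ∀ N : ℕ, ∀ h : E → ℕ, ∀ v : Fin (n + 1) → ℤ, (∑ e, h e) ≤ N → dv s t h = v + v →
    Dbox s t h (v + (eps n i - eps n j)) ≤ Dbox s t h v := by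
  intro N
  induction N using Nat.strong_induction_on with
  | _ N ih =>
  intro h v hN hh
  have key : ∀ w₁ w₂ : Fin (n + 1) → ℤ, w₁ + w₂ = v + v →
      Dbox s t h w₁ * Dbox s t h w₂
        = ∑ m ∈ Finset.Iic (h + h),
            ((((Finset.Iic h).filter (fun f => dv s t f = w₁)) ×ˢ
              ((Finset.Iic h).filter (fun g => dv s t g = w₂))).filter
                (fun p => p.1 + p.2 = m)).card := by
    intro w₁ w₂ _
    unfold Dbox
    rw [← Finset.card_product]
    apply Finset.card_eq_sum_card_fiberwise
    rintro ⟨f, g⟩ hp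
    simp only [Finset.mem_coe, Finset.mem_filter, Finset.mem_product, Finset.mem_Iic] at hp ⊢
    intro e
    show f e + g e ≤ h e + h e
    have h1 : f e ≤ h e := hp.1.1 e
    have h2 : g e ≤ h e := hp.2.1 e
    omega
  have hcomp : ∀ m ∈ Finset.Iic (h + h), m ≠ h →
      ((((Finset.Iic h).filter (fun f => dv s t f = v + (eps n i - eps n j))) ×ˢ
        ((Finset.Iic h).filter (fun g => dv s t g = v - (eps n i - eps n j)))).filter
          (fun p => p.1 + p.2 = m)).card
      ≤ ((((Finset.Iic h).filter (fun f => dv s t f = v)) ×ˢ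
          ((Finset.Iic h).filter (fun g => dv s t g = v))).filter
            (fun p => p.1 + p.2 = m)).card := by
    intro m hmem hmneh
    have hmhh : m ≤ h + h := Finset.mem_Iic.mp hmem
    have hmle : ∀ e, m e ≤ h e + h e := fun e => hmhh e
    by_cases hdm : dv s t m = v + v
    · set u : E → ℕ := fun e => min (m e) (h e) with hu
      set l : E → ℕ := fun e => m e - min (m e) (h e) with hl
      have hue : ∀ e, u e = min (m e) (h e) := fun e => by rw [hu]
      have hlee : ∀ e, l e = m e - u e := fun e => by rw [hl, hu]
      rw [fiber_card s t h m u l v (v + (eps n i - eps n j)) (v - (eps n i - eps n j))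
            (by abel) hdm hmle hue hlee,
          fiber_card s t h m u l v v v (by abel) hdm hmle hue hlee]
      have hlu : l ≤ u := by
        intro e
        show l e ≤ u e
        have h1 := hue e; have h2 := hlee e; have h3 := hmle e
        omega
      have hlm : l ≤ m := by
        intro e
        show l e ≤ m e
        have h1 := hue e; have h2 := hlee e
        omega
      have hulm : u = m - l := by
        funext e
        show u e = m e - l e
        have h1 := hue e; have h2 := hlee e
        omega
      have hdv' : dv s t (u - l) = (v - dv s t l) + (v - dv s t l) := by
        rw [dv_sub s t hlu, hulm, dv_sub s t hlm, hdm]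
        abel
      have hlt : (∑ e, (u - l) e) < ∑ e, h e := by
        apply Finset.sum_lt_sum
        · intro e _
          show u e - l e ≤ h e
          have h1 := hue e; have h2 := hlee e; have h3 := hmle e
          omega
        · obtain ⟨e₀, he₀⟩ := Function.ne_iff.mp hmneh
          refine ⟨e₀, Finset.mem_univ e₀, ?_⟩
          show u e₀ - l e₀ < h e₀
          have h1 := hue e₀; have h2 := hlee e₀; have h3 := hmle e₀
          omega
      have hre : v + (eps n i - eps n j) - dv s t l
          = (v - dv s t l) + (eps n i - eps n j) := by abel
      rw [hre]
      exact ih _ (lt_of_lt_of_le hlt hN) (u - l) (v - dv s t l) le_rfl hdv'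
    · have hemp := fiber_empty s t
        ((Finset.Iic h).filter (fun f => dv s t f = v + (eps n i - eps n j)))
        ((Finset.Iic h).filter (fun g => dv s t g = v - (eps n i - eps n j)))
        v (v + (eps n i - eps n j)) (v - (eps n i - eps n j)) m
        (fun f hf => (Finset.mem_filter.mp hf).2) (fun g hg => (Finset.mem_filter.mp hg).2)
        (by abel) hdm
      rw [hemp]
      simp
  have hhm : h ∈ Finset.Iic (h + h) := by
    rw [Finset.mem_Iic]
    intro e
    show h e ≤ h e + h e
    omega
  have fib_h : ∀ w₁ w₂ : Fin (n + 1) → ℤ, w₁ + w₂ = v + v →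
      (((((Finset.Iic h).filter (fun f => dv s t f = w₁)) ×ˢ
        ((Finset.Iic h).filter (fun g => dv s t g = w₂))).filter
          (fun p => p.1 + p.2 = h)).card) = Dbox s t h w₁ := by
    intro w₁ w₂ hw
    rw [fiber_card s t h h (fun e => min (h e) (h e)) (fun e => h e - min (h e) (h e))
          v w₁ w₂ hw hh (fun e => by omega) (fun e => rfl) (fun e => rfl)]
    have e1 : ((fun e => min (h e) (h e)) - (fun e => h e - min (h e) (h e)) : E → ℕ) = h := by
      funext e
      show min (h e) (h e) - (h e - min (h e) (h e)) = h e
      omega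
    have hz : (fun e => h e - min (h e) (h e)) = (0 : E → ℕ) := by
      funext e
      show h e - min (h e) (h e) = 0
      omega
    rw [e1, hz, dv_zero, sub_zero]
  have hα : (v + (eps n i - eps n j)) + (v - (eps n i - eps n j)) = v + v := by abel
  have k1 := key (v + (eps n i - eps n j)) (v - (eps n i - eps n j)) hα
  have k0 := key v v rfl
  have hsym : Dbox s t h (v - (eps n i - eps n j)) = Dbox s t h (v + (eps n i - eps n j)) :=
    (Dbox_symm s t h v _ hh).symm
  rw [← Finset.sum_erase_add _ _ hhm] at k1 k0
  rw [fib_h _ _ hα] at k1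
  rw [fib_h _ _ rfl] at k0
  rw [hsym] at k1
  have hAB : (∑ m ∈ (Finset.Iic (h + h)).erase h,
        ((((Finset.Iic h).filter (fun f => dv s t f = v + (eps n i - eps n j))) ×ˢ
          ((Finset.Iic h).filter (fun g => dv s t g = v - (eps n i - eps n j)))).filter
            (fun p => p.1 + p.2 = m)).card)
      ≤ ∑ m ∈ (Finset.Iic (h + h)).erase h,
        ((((Finset.Iic h).filter (fun f => dv s t f = v)) ×ˢ
          ((Finset.Iic h).filter (fun g => dv s t g = v))).filter
            (fun p => p.1 + p.2 = m)).card :=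
    Finset.sum_le_sum fun m hm =>
      hcomp m (Finset.mem_of_mem_erase hm) (Finset.ne_of_mem_erase hm)
  have hne : 0 < Dbox s t h (v + (eps n i - eps n j)) → 0 < Dbox s t h v := by
    intro hpos
    unfold Dbox at hpos ⊢
    rw [Finset.card_pos] at hpos ⊢
    obtain ⟨f, hf⟩ := hpos
    simp only [Finset.mem_filter, Finset.mem_Iic] at hf
    have hgle : h - f ≤ h := by
      intro e
      show h e - f e ≤ h e
      omega
    have hgdv : dv s t (h - f) = v - (eps n i - eps n j) := by
      rw [dv_sub s t hf.1, hh, hf.2]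
      abel
    obtain ⟨F, hF1, hF2⟩ := mid_nonempty s t hst hij h f (h - f) hf.1 hgle hf.2 hgdv
    exact ⟨F, Finset.mem_filter.mpr ⟨Finset.mem_Iic.mpr hF1, hF2⟩⟩
  set d1 := Dbox s t h (v + (eps n i - eps n j)) with hd1
  set d0 := Dbox s t h v with hd0
  by_contra hcon
  push_neg at hcon
  have h2 : 1 ≤ d0 := hne (by omega)
  have hkey2 : d1 * d1 + d0 ≤ d0 * d0 + d1 := by linarith [k1, k0, hAB]
  obtain ⟨k, hk⟩ : ∃ k, d1 = d0 + (k + 1) := ⟨d1 - d0 - 1, by omega⟩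
  rw [hk] at hkey2
  have expand : (d0 + (k + 1)) * (d0 + (k + 1))
      = d0 * d0 + 2 * (d0 * (k + 1)) + (k + 1) * (k + 1) := by ring
  rw [expand] at hkey2
  have hA : k + 1 ≤ d0 * (k + 1) := Nat.le_mul_of_pos_left (k + 1) h2
  have hB : k + 1 ≤ (k + 1) * (k + 1) := Nat.le_mul_of_pos_left (k + 1) (Nat.succ_pos k)
  linarith


lemma dv_apply (s t : E → Fin (n + 1)) (f : E → ℕ) (k : Fin (n + 1)) :
    dv s t f k = ∑ e, (f e : ℤ) * ((if k = s e then 1 else 0) - (if k = t e then 1 else 0)) :=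
  dvz_apply s t _ k

lemma S_finite [DecidableEq E] (s t : E → Fin (n + 1)) (hst : ∀ e, (s e : ℕ) < (t e : ℕ))
    (w : Fin (n + 1) → ℤ) : {f : E → ℕ | dv s t f = w}.Finite := by
  set Nb : ℕ := (- ∑ k : Fin (n + 1), ((k : ℕ) : ℤ) * w k).toNat with hNb
  apply Set.Finite.subset (Finset.finite_toSet (Finset.Iic (fun _ => Nb : E → ℕ)))
  intro f hf
  simp only [Set.mem_setOf_eq] at hf
  simp only [Finset.coe_Iic, Set.mem_Iic]
  have hphi : ∑ k : Fin (n + 1), ((k : ℕ) : ℤ) * dv s t f k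
      = ∑ e, (f e : ℤ) * (((s e : ℕ) : ℤ) - ((t e : ℕ) : ℤ)) := by
    simp only [dv_apply, Finset.mul_sum]
    rw [Finset.sum_comm]
    apply Finset.sum_congr rfl
    intro e _
    have step : ∀ k : Fin (n + 1),
        ((k : ℕ) : ℤ) * ((f e : ℤ) * ((if k = s e then 1 else 0) - (if k = t e then 1 else 0)))
        = (f e : ℤ) * ((if k = s e then ((k : ℕ) : ℤ) else 0)
            - (if k = t e then ((k : ℕ) : ℤ) else 0)) := by
      intro k
      split_ifs <;> ring
    rw [Finset.sum_congr rfl fun k _ => step k, ← Finset.mul_sum]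
    congr 1
    rw [Finset.sum_sub_distrib,
        Finset.sum_ite_eq' Finset.univ (s e) (fun k : Fin (n + 1) => ((k : ℕ) : ℤ)),
        Finset.sum_ite_eq' Finset.univ (t e) (fun k : Fin (n + 1) => ((k : ℕ) : ℤ))]
    simp
  rw [hf] at hphi
  have hstep : ∑ e, (f e : ℤ) * (((s e : ℕ) : ℤ) - ((t e : ℕ) : ℤ)) ≤ ∑ e, -(f e : ℤ) := by
    apply Finset.sum_le_sum
    intro e _
    have h1 : ((s e : ℕ) : ℤ) - ((t e : ℕ) : ℤ) ≤ -1 := by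
      have := hst e
      omega
    have h2 : (0 : ℤ) ≤ (f e : ℤ) := Int.natCast_nonneg _
    nlinarith
  have h3 : ∑ e, -(f e : ℤ) = - ∑ e, (f e : ℤ) := by
    rw [Finset.sum_neg_distrib]
  have hb : ∑ e, (f e : ℤ) ≤ - ∑ k : Fin (n + 1), ((k : ℕ) : ℤ) * w k := by
    linarith [hstep, hphi, h3]
  intro e
  show f e ≤ Nb
  have h4 : (f e : ℤ) ≤ ∑ e, (f e : ℤ) :=
    Finset.single_le_sum (fun e _ => Int.natCast_nonneg (f e)) (Finset.mem_univ e)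
  omega

/-- fibres of the sum map on unbounded pairs are counted by the box `[0,m]`. -/
lemma fiber_card_top [DecidableEq E] (s t : E → Fin (n + 1)) (T₁ T₂ : Finset (E → ℕ))
    (v w₁ w₂ : Fin (n + 1) → ℤ) (m : E → ℕ)
    (hT₁ : ∀ f, f ∈ T₁ ↔ dv s t f = w₁) (hT₂ : ∀ g, g ∈ T₂ ↔ dv s t g = w₂)
    (hw : w₁ + w₂ = v + v) (hm : dv s t m = v + v) :
    ((T₁ ×ˢ T₂).filter (fun p => p.1 + p.2 = m)).card = Dbox s t m w₁ := by
  unfold Dbox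
  apply Finset.card_nbij' (fun p => p.1) (fun f => (f, m - f))
  · rintro ⟨f, g⟩ hp
    simp only [Finset.mem_coe, Finset.mem_filter, Finset.mem_product, Finset.mem_Iic] at hp ⊢
    obtain ⟨⟨h1, h2⟩, h3⟩ := hp
    constructor
    · intro e
      show f e ≤ m e
      have h4 : f e + g e = m e := congrFun h3 e
      omega
    · exact (hT₁ f).mp h1
  · intro f hf
    simp only [Finset.mem_coe, Finset.mem_filter, Finset.mem_product, Finset.mem_Iic] at hf ⊢
    obtain ⟨h1, h2⟩ := hf
    refine ⟨⟨(hT₁ f).mpr h2, (hT₂ _).mpr ?_⟩, ?_⟩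
    · rw [dv_sub s t h1, hm, h2, ← hw]
      abel
    · funext e
      have h3 : f e ≤ m e := h1 e
      show f e + (m e - f e) = m e
      omega
  · rintro ⟨f, g⟩ hp
    simp only [Finset.mem_coe, Finset.mem_filter, Finset.mem_product] at hp
    obtain ⟨⟨h1, h2⟩, h3⟩ := hp
    show (f, m - f) = (f, g)
    have h5 : m - f = g := by
      funext e
      have h4 : f e + g e = m e := congrFun h3 e
      show m e - f e = g e
      omega
    rw [h5]
  · intro f hf
    rfl

end KPFAux

theorem restricted_kpf_discretely_log_concave (n : ℕ) (hn : 1 ≤ n)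
    (E : Type) [Fintype E] (s t : E → Fin (n + 1)) (hst : ∀ e, s e < t e)
    (v : Fin (n + 1) → ℤ) (i j : Fin (n + 1)) :
    kpfG n E s t (v + eps n i - eps n j) * kpfG n E s t (v + eps n j - eps n i)
      ≤ kpfG n E s t v ^ 2 := by
  classical
  by_cases hij : i = j
  · subst hij
    have h1 : v + eps n i - eps n i = v := add_sub_cancel_right v (eps n i)
    rw [h1, sq]
  · letI : DecidableEq E := Classical.decEq E
    have hst' : ∀ e, s e ≠ t e := fun e => ne_of_lt (hst e)
    have hstv : ∀ e, ((s e : ℕ) : ℕ) < ((t e : ℕ) : ℕ) := fun e => hst e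
    have hfin : ∀ w : Fin (n + 1) → ℤ, {f : E → ℕ | KPFAux.dv s t f = w}.Finite :=
      KPFAux.S_finite s t hstv
    have hk : ∀ w : Fin (n + 1) → ℤ, kpfG n E s t w = ((hfin w).toFinset).card := by
      intro w
      show Set.ncard {f : E → ℕ | KPFAux.dv s t f = w} = ((hfin w).toFinset).card
      exact Set.ncard_eq_toFinset_card _ (hfin w)
    have hmem : ∀ (w : Fin (n + 1) → ℤ) (f : E → ℕ),
        f ∈ (hfin w).toFinset ↔ KPFAux.dv s t f = w := by
      intro w f
      rw [Set.Finite.mem_toFinset]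
      exact Iff.rfl
    have habi : v + eps n i - eps n j = v + (eps n i - eps n j) := by abel
    have habj : v + eps n j - eps n i = v - (eps n i - eps n j) := by abel
    rw [habi, habj, sq]
    simp only [hk]
    set M := (((hfin (v + (eps n i - eps n j))).toFinset ×ˢ
          (hfin (v - (eps n i - eps n j))).toFinset).image (fun p => p.1 + p.2))
        ∪ (((hfin v).toFinset ×ˢ (hfin v).toFinset).image (fun p => p.1 + p.2)) with hM
    have c1 : ((hfin (v + (eps n i - eps n j))).toFinset).card *
          ((hfin (v - (eps n i - eps n j))).toFinset).card
        = ∑ m ∈ M, (((hfin (v + (eps n i - eps n j))).toFinset ×ˢ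
            (hfin (v - (eps n i - eps n j))).toFinset).filter
              (fun p => p.1 + p.2 = m)).card := by
      rw [← Finset.card_product]
      apply Finset.card_eq_sum_card_fiberwise
      intro p hp
      rw [hM]
      exact Finset.mem_union_left _ (Finset.mem_image_of_mem _ hp)
    have c0 : ((hfin v).toFinset).card * ((hfin v).toFinset).card
        = ∑ m ∈ M, (((hfin v).toFinset ×ˢ (hfin v).toFinset).filter
            (fun p => p.1 + p.2 = m)).card := by
      rw [← Finset.card_product]
      apply Finset.card_eq_sum_card_fiberwise
      intro p hp
      rw [hM]
      exact Finset.mem_union_right _ (Finset.mem_image_of_mem _ hp)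
    rw [c1, c0]
    apply Finset.sum_le_sum
    intro m _
    by_cases hdm : KPFAux.dv s t m = v + v
    · rw [KPFAux.fiber_card_top s t _ _ v (v + (eps n i - eps n j)) (v - (eps n i - eps n j)) m
            (hmem _) (hmem _) (by abel) hdm,
          KPFAux.fiber_card_top s t _ _ v v v m (hmem v) (hmem v) rfl hdm]
      exact KPFAux.thmA s t hst' hij (∑ e, m e) m v le_rfl hdm
    · rw [KPFAux.fiber_empty s t _ _ v (v + (eps n i - eps n j)) (v - (eps n i - eps n j)) m
            (fun f hf => (hmem _ f).mp hf) (fun g hg => (hmem _ g).mp hg) (by abel) hdm]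
      simp
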